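/- arXiv:2407.03565 — 3 statements merged into one kernel-verified Lean document; each statement's English description precedes it below -/
import Mathlib

section
/- Let σ₁, σ₂, σ₃ ∈ ℝ with σ₁ + σ₂ ≠ 0. Then there exists a constant C₀ > 0, depending only on σ₁, σ₂, σ₃, such that the following holds: if τ₀, τ₁, τ₂, τ₃ ∈ ℝ and ξ₁, ξ₂, ξ₃ ∈ ℝ^d satisfy τ₀ + τ₁ + τ₂ + τ₃ = 0, ξ₁ + ξ₂ + ξ₃ = 0, and |ξ₃| ≤ C₀ |ξ₁|, then |τ₀| + max_{1≤j≤3} |τⱼ + σⱼ|ξⱼ|²| ≥ C₀ |ξ₁|². -/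
theorem modulation_lower_bound (d : ℕ) (σ₁ σ₂ σ₃ : ℝ) (h12 : σ₁ + σ₂ ≠ 0) :
    ∃ C₀ > (0 : ℝ), ∀ (τ₀ τ₁ τ₂ τ₃ : ℝ) (ξ₁ ξ₂ ξ₃ : EuclideanSpace ℝ (Fin d)),
      τ₀ + τ₁ + τ₂ + τ₃ = 0 → ξ₁ + ξ₂ + ξ₃ = 0 → ‖ξ₃‖ ≤ C₀ * ‖ξ₁‖ →
      |τ₀| + max (max |τ₁ + σ₁ * ‖ξ₁‖ ^ 2| |τ₂ + σ₂ * ‖ξ₂‖ ^ 2|) |τ₃ + σ₃ * ‖ξ₃‖ ^ 2|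
        ≥ C₀ * ‖ξ₁‖ ^ 2 := by
  have hspos : 0 < |σ₁ + σ₂| := abs_pos.mpr h12
  set s := |σ₁ + σ₂| with hs
  set M : ℝ := 6 + 6 * |σ₂| + 2 * |σ₃| with hM
  have hMpos : 0 < M := by positivity
  refine ⟨min 1 (s / M), lt_min one_pos (by positivity), ?_⟩
  intro τ₀ τ₁ τ₂ τ₃ ξ₁ ξ₂ ξ₃ hτ hξ hle
  set C₀ := min 1 (s / M) with hC0
  have hC1 : C₀ ≤ 1 := min_le_left _ _
  have hC2 : C₀ ≤ s / M := min_le_right _ _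
  have hCpos : 0 < C₀ := lt_min one_pos (by positivity)
  -- ξ₂ = -(ξ₁ + ξ₃)
  have h2 : ξ₂ = -(ξ₁ + ξ₃) := by
    have h' : ξ₂ + (ξ₁ + ξ₃) = 0 := by rw [← hξ]; abel
    exact eq_neg_of_add_eq_zero_left h'
  have hn2 : ‖ξ₂‖ = ‖ξ₁ + ξ₃‖ := by rw [h2, norm_neg]
  set t := ‖ξ₁‖ with ht
  set u := ‖ξ₃‖ with hu
  have ht0 : 0 ≤ t := norm_nonneg _
  have hu0 : 0 ≤ u := norm_nonneg _
  set p : ℝ := inner ℝ ξ₁ ξ₃ with hp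
  have hsq : ‖ξ₂‖ ^ 2 = t ^ 2 + 2 * p + u ^ 2 := by
    rw [hn2]; exact norm_add_sq_real ξ₁ ξ₃
  have hpabs : |p| ≤ t * u := abs_real_inner_le_norm ξ₁ ξ₃
  -- the resonance quantity
  set E : ℝ := σ₁ * t ^ 2 + σ₂ * ‖ξ₂‖ ^ 2 + σ₃ * u ^ 2 with hE
  set mx := max (max |τ₁ + σ₁ * t ^ 2| |τ₂ + σ₂ * ‖ξ₂‖ ^ 2|) |τ₃ + σ₃ * u ^ 2| with hmx
  have hmx1 : |τ₁ + σ₁ * t ^ 2| ≤ mx := le_max_of_le_left (le_max_left _ _)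
  have hmx2 : |τ₂ + σ₂ * ‖ξ₂‖ ^ 2| ≤ mx := le_max_of_le_left (le_max_right _ _)
  have hmx3 : |τ₃ + σ₃ * u ^ 2| ≤ mx := le_max_right _ _
  have hmx0 : 0 ≤ mx := le_trans (abs_nonneg _) hmx3
  -- upper bound on |E|
  have hup : |E| ≤ |τ₀| + 3 * mx := by
    have hEeq : E = τ₀ + (τ₁ + σ₁ * t ^ 2) + (τ₂ + σ₂ * ‖ξ₂‖ ^ 2) + (τ₃ + σ₃ * u ^ 2) := by
      rw [hE]; linarith
    rw [hEeq]
    calc |τ₀ + (τ₁ + σ₁ * t ^ 2) + (τ₂ + σ₂ * ‖ξ₂‖ ^ 2) + (τ₃ + σ₃ * u ^ 2)|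
        ≤ |τ₀| + |τ₁ + σ₁ * t ^ 2| + |τ₂ + σ₂ * ‖ξ₂‖ ^ 2| + |τ₃ + σ₃ * u ^ 2| := by
          have a1 := abs_add_le (τ₀ + (τ₁ + σ₁ * t ^ 2) + (τ₂ + σ₂ * ‖ξ₂‖ ^ 2)) (τ₃ + σ₃ * u ^ 2)
          have a2 := abs_add_le (τ₀ + (τ₁ + σ₁ * t ^ 2)) (τ₂ + σ₂ * ‖ξ₂‖ ^ 2)
          have a3 := abs_add_le τ₀ (τ₁ + σ₁ * t ^ 2)
          linarith
      _ ≤ |τ₀| + 3 * mx := by linarith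
  -- lower bound on |E|
  have hlow : s * t ^ 2 - 2 * |σ₂| * (t * u) - (|σ₂| + |σ₃|) * u ^ 2 ≤ |E| := by
    have hEeq2 : (σ₁ + σ₂) * t ^ 2 = E - 2 * σ₂ * p - (σ₂ + σ₃) * u ^ 2 := by
      rw [hE, hsq]; ring
    have h1 : s * t ^ 2 = |(σ₁ + σ₂) * t ^ 2| := by
      rw [abs_mul, hs, abs_of_nonneg (by positivity : (0:ℝ) ≤ t ^ 2)]
    have h3 : |(σ₁ + σ₂) * t ^ 2| ≤ |E| + |2 * σ₂ * p| + |(σ₂ + σ₃) * u ^ 2| := by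
      rw [hEeq2]
      calc |E - 2 * σ₂ * p - (σ₂ + σ₃) * u ^ 2|
          ≤ |E - 2 * σ₂ * p| + |(σ₂ + σ₃) * u ^ 2| := abs_sub _ _
        _ ≤ |E| + |2 * σ₂ * p| + |(σ₂ + σ₃) * u ^ 2| := by
            have := abs_sub E (2 * σ₂ * p); linarith
    have h4 : |2 * σ₂ * p| ≤ 2 * |σ₂| * (t * u) := by
      rw [abs_mul, abs_mul, abs_two]
      have : 0 ≤ 2 * |σ₂| := by positivity
      exact mul_le_mul_of_nonneg_left hpabs this
    have h5 : |(σ₂ + σ₃) * u ^ 2| ≤ (|σ₂| + |σ₃|) * u ^ 2 := by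
      rw [abs_mul, abs_of_nonneg (by positivity : (0:ℝ) ≤ u ^ 2)]
      exact mul_le_mul_of_nonneg_right (abs_add_le _ _) (by positivity)
    linarith
  -- bounds from hle
  set v := ‖ξ₂‖ with hv
  clear_value C₀ s M t u p v E mx
  clear hξ h2 hn2 hsq hτ hv hp ht hu hC0 hs hE hmx ξ₁ ξ₂ ξ₃
  have htu : t * u ≤ C₀ * t ^ 2 := by nlinarith
  have huu : u ^ 2 ≤ C₀ * t ^ 2 := by nlinarith [mul_le_mul hle hle hu0 (by positivity : (0:ℝ) ≤ C₀ * t), mul_le_mul_of_nonneg_left hC1 (le_of_lt hCpos), sq_nonneg t]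
  have hCM : (6 + 6 * |σ₂| + 2 * |σ₃|) * C₀ ≤ s := by
    have h := (le_div_iff₀ hMpos).mp hC2
    rw [hM] at h
    linarith
  have habs2 : 0 ≤ |σ₂| := abs_nonneg _
  have habs3 : 0 ≤ |σ₃| := abs_nonneg _
  -- conclude
  have key : 3 * C₀ * t ^ 2 ≤ |E| := by
    nlinarith [mul_le_mul_of_nonneg_left htu habs2, mul_le_mul_of_nonneg_left huu habs2,
      mul_le_mul_of_nonneg_left huu habs3, sq_nonneg t, hCpos.le,
      mul_le_mul_of_nonneg_right hCM (sq_nonneg t)]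
  linarith [abs_nonneg τ₀]
end

section
/- Let α, β, γ be nonzero real numbers with α ≠ β, set μ = βγ - γα - αβ, and assume μ ≤ 0. Let k be a real root of αk² - β(k-1)² - γ = 0. Then there exists a constant C > 0 (depending only on α, β, γ) such that for all integers p and all nonzero integers q with |k - p/q| ≤ 1/q², one has |αp² - β(p-q)² - γq²| ≤ C. -/
theorem diophantine_resonance_bound (α β γ k : ℝ)
    (hα : α ≠ 0) (hβ : β ≠ 0) (hγ : γ ≠ 0) (hab : α ≠ β)
    (hμ : β * γ - γ * α - α * β ≤ 0)
    (hk : α * k ^ 2 - β * (k - 1) ^ 2 - γ = 0) :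
    ∃ C > (0 : ℝ), ∀ (p q : ℤ), q ≠ 0 → |k - (p : ℝ) / (q : ℝ)| ≤ 1 / (q : ℝ) ^ 2 →
      |α * (p : ℝ) ^ 2 - β * ((p : ℝ) - (q : ℝ)) ^ 2 - γ * (q : ℝ) ^ 2| ≤ C := by
  have hd0 : α - β ≠ 0 := sub_ne_zero.mpr hab
  obtain ⟨k', hk'def⟩ : ∃ k', k' = -2 * β / (α - β) - k := ⟨_, rfl⟩
  refine ⟨|α - β| * (1 + |k - k'|) + 1, by positivity, ?_⟩
  intro p q hq hle
  have hq1 : (1 : ℝ) ≤ |(q : ℝ)| := by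
    have : (1 : ℤ) ≤ |q| := Int.one_le_abs hq
    calc (1:ℝ) ≤ ((|q| : ℤ) : ℝ) := by exact_mod_cast this
    _ = |(q:ℝ)| := by push_cast; ring
  have hqpos : (0 : ℝ) < |(q : ℝ)| := lt_of_lt_of_le one_pos hq1
  have hqne : (q : ℝ) ≠ 0 := by
    intro h; rw [h, abs_zero] at hqpos; exact lt_irrefl 0 hqpos
  -- factorization
  have hfac : α * (p : ℝ) ^ 2 - β * ((p : ℝ) - (q : ℝ)) ^ 2 - γ * (q : ℝ) ^ 2
      = (α - β) * (((p : ℝ) - k * q) * ((p : ℝ) - k' * q)) := by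
    rw [hk'def]
    field_simp
    nlinarith [hk, sq_nonneg ((q:ℝ)), sq_nonneg ((p:ℝ))]
  -- bound on |p - k q|
  have h1 : |(p : ℝ) - k * q| ≤ 1 / |(q : ℝ)| := by
    have := mul_le_mul_of_nonneg_left hle (le_of_lt hqpos)
    have e1 : |(q:ℝ)| * |k - (p:ℝ)/q| = |(p:ℝ) - k * q| := by
      rw [← abs_mul]
      rw [show (q:ℝ) * (k - (p:ℝ)/q) = -((p:ℝ) - k * q) by field_simp; ring, abs_neg]
    have e2 : |(q:ℝ)| * (1 / (q:ℝ)^2) = 1 / |(q:ℝ)| := by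
      rw [← sq_abs]
      field_simp
    rw [e1, e2] at this
    exact this
  -- bound on |p - k' q|
  have h2 : |(p : ℝ) - k' * q| ≤ 1 / |(q : ℝ)| + |k - k'| * |(q : ℝ)| := by
    have : (p : ℝ) - k' * q = ((p : ℝ) - k * q) + (k - k') * q := by ring
    rw [this]
    calc |((p : ℝ) - k * q) + (k - k') * q| ≤ |(p : ℝ) - k * q| + |(k - k') * q| :=
          abs_add_le _ _
      _ = |(p : ℝ) - k * q| + |k - k'| * |(q:ℝ)| := by rw [abs_mul]
      _ ≤ 1 / |(q : ℝ)| + |k - k'| * |(q:ℝ)| := by linarith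
  calc |α * (p : ℝ) ^ 2 - β * ((p : ℝ) - (q : ℝ)) ^ 2 - γ * (q : ℝ) ^ 2|
      = |α - β| * (|(p : ℝ) - k * q| * |(p : ℝ) - k' * q|) := by
        rw [hfac, abs_mul, abs_mul]
    _ ≤ |α - β| * ((1 / |(q:ℝ)|) * (1 / |(q : ℝ)| + |k - k'| * |(q:ℝ)|)) := by
        apply mul_le_mul_of_nonneg_left _ (abs_nonneg _)
        exact mul_le_mul h1 h2 (abs_nonneg _) (by positivity)
    _ ≤ |α - β| * (1 + |k - k'|) := by
        apply mul_le_mul_of_nonneg_left _ (abs_nonneg _)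
        have e : (1 / |(q:ℝ)|) * (1 / |(q : ℝ)| + |k - k'| * |(q:ℝ)|)
            = 1 / |(q:ℝ)|^2 + |k - k'| * (|(q:ℝ)| / |(q:ℝ)|) := by ring
        rw [e, div_self (ne_of_gt hqpos), mul_one]
        have : 1 / |(q:ℝ)|^2 ≤ 1 := by
          rw [div_le_one (by positivity)]
          nlinarith
        linarith
    _ ≤ |α - β| * (1 + |k - k'|) + 1 := by linarith
end

section
/- Fix real numbers α, β, γ, k, N with αk² - β(k-1)² - γ = 0. Suppose f, g, h : ℝ → ℂ are differentiable and satisfy f'(t) = -N g(t) h(t), g'(t) = N f(t) conj(h(t)), h'(t) = N f(t) conj(g(t)). Define u(t,x) = f(t) e^{-itαk²N²} e^{ikNx}, v(t,x) = g(t) e^{-itβ(k-1)²N²} e^{i(k-1)Nx}, w(t,x) = h(t) e^{-itγN²} e^{iNx}. Then (u, v, w) solves the system i∂ₜu + α∂ₓ²u = -(∂ₓw)·v, i∂ₜv + β∂ₓ²v = -(∂ₓ conj(w))·u, i∂ₜw + γ∂ₓ²w = ∂ₓ(u·conj(v)) for all (t,x) ∈ ℝ × ℝ. -/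
noncomputable def planeWave (F : ℝ → ℂ) (ω ξ : ℝ) (t x : ℝ) : ℂ :=
  F t * Complex.exp (-(Complex.I) * (ω : ℂ) * (t : ℂ)) *
    Complex.exp (Complex.I * (ξ : ℂ) * (x : ℂ))

lemma hasDerivAt_cexp_real (a : ℂ) (x : ℝ) :
    HasDerivAt (fun x' : ℝ => Complex.exp (a * (x' : ℂ))) (a * Complex.exp (a * x)) x := by
  have h1 : HasDerivAt (fun x' : ℝ => (x' : ℂ)) 1 x := Complex.ofRealCLM.hasDerivAt
  simpa [mul_comm] using (h1.const_mul a).cexp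

lemma pw_hasDerivAt_x (F : ℝ → ℂ) (ω ξ t x : ℝ) :
    HasDerivAt (fun x' : ℝ => planeWave F ω ξ t x')
      (Complex.I * ξ * planeWave F ω ξ t x) x := by
  have := (hasDerivAt_cexp_real (Complex.I * ξ) x).const_mul
      (F t * Complex.exp (-(Complex.I) * (ω : ℂ) * (t : ℂ)))
  simpa [planeWave, mul_assoc, mul_comm, mul_left_comm] using this

lemma pw_deriv_x (F : ℝ → ℂ) (ω ξ t x : ℝ) :
    deriv (fun x' : ℝ => planeWave F ω ξ t x') x = Complex.I * ξ * planeWave F ω ξ t x :=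
  (pw_hasDerivAt_x F ω ξ t x).deriv

lemma pw_deriv2_x (F : ℝ → ℂ) (ω ξ t x : ℝ) :
    deriv (deriv (fun x' : ℝ => planeWave F ω ξ t x')) x
      = Complex.I * ξ * (Complex.I * ξ * planeWave F ω ξ t x) := by
  have e : deriv (fun x' : ℝ => planeWave F ω ξ t x')
      = fun x' : ℝ => Complex.I * ξ * planeWave F ω ξ t x' :=
    funext fun x' => pw_deriv_x F ω ξ t x'
  rw [e]
  exact ((pw_hasDerivAt_x F ω ξ t x).const_mul (Complex.I * ξ)).deriv

lemma pw_hasDerivAt_t (F : ℝ → ℂ) (hF : Differentiable ℝ F) (ω ξ t x : ℝ) :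
    HasDerivAt (fun t' : ℝ => planeWave F ω ξ t' x)
      ((deriv F t * Complex.exp (-(Complex.I) * (ω : ℂ) * (t : ℂ))
        + F t * (-(Complex.I) * ω * Complex.exp (-(Complex.I) * (ω : ℂ) * (t : ℂ))))
        * Complex.exp (Complex.I * (ξ : ℂ) * (x : ℂ))) t := by
  have h1 : HasDerivAt F (deriv F t) t := (hF t).hasDerivAt
  have h2 := hasDerivAt_cexp_real (-(Complex.I) * ω) t
  have := (h1.mul h2).mul_const (Complex.exp (Complex.I * (ξ : ℂ) * (x : ℂ)))
  simpa [planeWave, mul_assoc, mul_comm, mul_left_comm] using this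

theorem plane_wave_solves_system (α β γ k N : ℝ) (f g h : ℝ → ℂ)
    (hres : α * k ^ 2 - β * (k - 1) ^ 2 - γ = 0)
    (hf : Differentiable ℝ f) (hg : Differentiable ℝ g) (hh : Differentiable ℝ h)
    (hf' : ∀ t, deriv f t = -(N : ℂ) * g t * h t)
    (hg' : ∀ t, deriv g t = (N : ℂ) * f t * (starRingEnd ℂ) (h t))
    (hh' : ∀ t, deriv h t = (N : ℂ) * f t * (starRingEnd ℂ) (g t)) :
    ∀ t x : ℝ,
      (Complex.I * deriv (fun t' : ℝ => planeWave f (α * k ^ 2 * N ^ 2) (k * N) t' x) t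
          + (α : ℂ) *
            deriv (deriv (fun x' : ℝ => planeWave f (α * k ^ 2 * N ^ 2) (k * N) t x')) x
        = -(deriv (fun x' : ℝ => planeWave h (γ * N ^ 2) N t x') x) *
            planeWave g (β * (k - 1) ^ 2 * N ^ 2) ((k - 1) * N) t x) ∧
      (Complex.I * deriv (fun t' : ℝ => planeWave g (β * (k - 1) ^ 2 * N ^ 2) ((k - 1) * N) t' x) t
          + (β : ℂ) *
            deriv (deriv (fun x' : ℝ =>
              planeWave g (β * (k - 1) ^ 2 * N ^ 2) ((k - 1) * N) t x')) x
        = -(deriv (fun x' : ℝ => (starRingEnd ℂ) (planeWave h (γ * N ^ 2) N t x')) x) *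
            planeWave f (α * k ^ 2 * N ^ 2) (k * N) t x) ∧
      (Complex.I * deriv (fun t' : ℝ => planeWave h (γ * N ^ 2) N t' x) t
          + (γ : ℂ) * deriv (deriv (fun x' : ℝ => planeWave h (γ * N ^ 2) N t x')) x
        = deriv (fun x' : ℝ => planeWave f (α * k ^ 2 * N ^ 2) (k * N) t x' *
            (starRingEnd ℂ) (planeWave g (β * (k - 1) ^ 2 * N ^ 2) ((k - 1) * N) t x')) x) := by
  intro t x
  have hresC : (α : ℂ) * (k : ℂ) ^ 2 - (β : ℂ) * ((k : ℂ) - 1) ^ 2 - (γ : ℂ) = 0 := by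
    exact_mod_cast hres
  -- abbreviations
  set Ef := Complex.exp (-(Complex.I) * ((α * k ^ 2 * N ^ 2 : ℝ) : ℂ) * (t : ℂ)) with hEf
  set Eg := Complex.exp (-(Complex.I) * ((β * (k - 1) ^ 2 * N ^ 2 : ℝ) : ℂ) * (t : ℂ)) with hEg
  set Eh := Complex.exp (-(Complex.I) * ((γ * N ^ 2 : ℝ) : ℂ) * (t : ℂ)) with hEh
  set ef := Complex.exp (Complex.I * ((k * N : ℝ) : ℂ) * (x : ℂ)) with hef
  set eg := Complex.exp (Complex.I * (((k - 1) * N : ℝ) : ℂ) * (x : ℂ)) with heg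
  set eh := Complex.exp (Complex.I * ((N : ℝ) : ℂ) * (x : ℂ)) with heh
  have hE1 : Ef = Eg * Eh := by
    rw [hEf, hEg, hEh, ← Complex.exp_add]
    congr 1
    push_cast
    linear_combination (-(Complex.I) * (N : ℂ) ^ 2 * (t : ℂ)) * hresC
  have hx1 : ef = eg * eh := by
    rw [hef, heg, heh, ← Complex.exp_add]
    congr 1
    push_cast
    ring
  -- conj of planeWave g and h
  have hconjh : ∀ x' : ℝ, (starRingEnd ℂ) (planeWave h (γ * N ^ 2) N t x')
      = (starRingEnd ℂ) (h t) * Complex.exp (Complex.I * ((γ * N ^ 2 : ℝ) : ℂ) * (t : ℂ))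
        * Complex.exp (-(Complex.I) * ((N : ℝ) : ℂ) * (x' : ℂ)) := by
    intro x'
    simp only [planeWave, map_mul, ← Complex.exp_conj, map_neg, Complex.conj_I,
      Complex.conj_ofReal]
    ring_nf
  refine ⟨?_, ?_, ?_⟩
  · rw [(pw_hasDerivAt_t f hf _ _ t x).deriv, pw_deriv2_x, pw_deriv_x, hf' t]
    show _ = -(Complex.I * ((N:ℝ):ℂ) * planeWave h _ _ t x) * planeWave g _ _ t x
    simp only [planeWave, ← hEf, ← hEg, ← hEh, ← hef, ← heg, ← heh, hE1, hx1]
    push_cast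
    ring
  · -- derivative of conj planeWave h
    have hd : deriv (fun x' : ℝ => (starRingEnd ℂ) (planeWave h (γ * N ^ 2) N t x')) x
        = (starRingEnd ℂ) (h t) * Complex.exp (Complex.I * ((γ * N ^ 2 : ℝ) : ℂ) * (t : ℂ))
          * ((-(Complex.I) * ((N : ℝ) : ℂ)) * Complex.exp (-(Complex.I) * ((N : ℝ) : ℂ) * (x : ℂ))) := by
      have e : (fun x' : ℝ => (starRingEnd ℂ) (planeWave h (γ * N ^ 2) N t x'))
          = fun x' : ℝ => (starRingEnd ℂ) (h t) * Complex.exp (Complex.I * ((γ * N ^ 2 : ℝ) : ℂ) * (t : ℂ))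
            * Complex.exp (-(Complex.I) * ((N : ℝ) : ℂ) * (x' : ℂ)) := funext hconjh
      rw [e]
      exact ((hasDerivAt_cexp_real (-(Complex.I) * ((N : ℝ) : ℂ)) x).const_mul _).deriv
    rw [(pw_hasDerivAt_t g hg _ _ t x).deriv, pw_deriv2_x, hd, hg' t]
    have hE2 : Complex.exp (Complex.I * ((γ * N ^ 2 : ℝ) : ℂ) * (t : ℂ)) * Ef = Eg := by
      rw [hEf, hEg, ← Complex.exp_add]
      congr 1
      push_cast
      linear_combination (-(Complex.I) * (N : ℂ) ^ 2 * (t : ℂ)) * hresC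
    have hx2 : Complex.exp (-(Complex.I) * ((N : ℝ) : ℂ) * (x : ℂ)) * ef = eg := by
      rw [hef, heg, ← Complex.exp_add]
      congr 1
      push_cast
      ring
    simp only [planeWave, ← hEf, ← hEg, ← hef, ← heg]
    rw [← hE2, ← hx2]
    push_cast
    ring
  · -- third equation
    have hconjg : ∀ x' : ℝ, (starRingEnd ℂ) (planeWave g (β * (k-1) ^ 2 * N ^ 2) ((k-1)*N) t x')
        = (starRingEnd ℂ) (g t) * Complex.exp (Complex.I * ((β * (k-1) ^ 2 * N ^ 2 : ℝ) : ℂ) * (t : ℂ))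
          * Complex.exp (-(Complex.I) * (((k-1)*N : ℝ) : ℂ) * (x' : ℂ)) := by
      intro x'
      simp only [planeWave, map_mul, ← Complex.exp_conj, map_neg, Complex.conj_I,
        Complex.conj_ofReal]
      ring_nf
    have hd : deriv (fun x' : ℝ => planeWave f (α * k ^ 2 * N ^ 2) (k * N) t x' *
          (starRingEnd ℂ) (planeWave g (β * (k - 1) ^ 2 * N ^ 2) ((k - 1) * N) t x')) x
        = Complex.I * ((k*N : ℝ) : ℂ) * planeWave f (α * k ^ 2 * N ^ 2) (k * N) t x *
            (starRingEnd ℂ) (planeWave g (β * (k - 1) ^ 2 * N ^ 2) ((k - 1) * N) t x)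
          + planeWave f (α * k ^ 2 * N ^ 2) (k * N) t x *
            ((starRingEnd ℂ) (g t) * Complex.exp (Complex.I * ((β * (k-1) ^ 2 * N ^ 2 : ℝ) : ℂ) * (t : ℂ))
              * ((-(Complex.I) * (((k-1)*N : ℝ) : ℂ)) * Complex.exp (-(Complex.I) * (((k-1)*N : ℝ) : ℂ) * (x : ℂ)))) := by
      have e2 : (fun x' : ℝ => (starRingEnd ℂ) (planeWave g (β * (k - 1) ^ 2 * N ^ 2) ((k - 1) * N) t x'))
          = fun x' : ℝ => (starRingEnd ℂ) (g t) * Complex.exp (Complex.I * ((β * (k-1) ^ 2 * N ^ 2 : ℝ) : ℂ) * (t : ℂ))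
            * Complex.exp (-(Complex.I) * (((k-1)*N : ℝ) : ℂ) * (x' : ℂ)) := funext hconjg
      have h2 : HasDerivAt (fun x' : ℝ => (starRingEnd ℂ) (planeWave g (β * (k - 1) ^ 2 * N ^ 2) ((k - 1) * N) t x'))
          ((starRingEnd ℂ) (g t) * Complex.exp (Complex.I * ((β * (k-1) ^ 2 * N ^ 2 : ℝ) : ℂ) * (t : ℂ))
            * ((-(Complex.I) * (((k-1)*N : ℝ) : ℂ)) * Complex.exp (-(Complex.I) * (((k-1)*N : ℝ) : ℂ) * (x : ℂ)))) x := by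
        rw [e2]
        exact (hasDerivAt_cexp_real (-(Complex.I) * (((k-1)*N : ℝ) : ℂ)) x).const_mul _
      have := (pw_hasDerivAt_x f (α * k ^ 2 * N ^ 2) (k * N) t x).mul h2
      exact this.deriv
    rw [(pw_hasDerivAt_t h hh _ _ t x).deriv, pw_deriv2_x, hd, hh' t, hconjg x]
    have hE3 : Ef * Complex.exp (Complex.I * ((β * (k-1) ^ 2 * N ^ 2 : ℝ) : ℂ) * (t : ℂ)) = Eh := by
      rw [hEf, hEh, ← Complex.exp_add]
      congr 1
      push_cast
      linear_combination (-(Complex.I) * (N : ℂ) ^ 2 * (t : ℂ)) * hresC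
    have hx3 : ef * Complex.exp (-(Complex.I) * (((k-1)*N : ℝ) : ℂ) * (x : ℂ)) = eh := by
      rw [hef, heh, ← Complex.exp_add]
      congr 1
      push_cast
      ring
    simp only [planeWave, ← hEf, ← hEh, ← hef, ← heh]
    rw [← hE3, ← hx3]
    push_cast
    ring
end
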